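/- Let G be a finite abelian group with |G| ≥ 3. Then for every k ∈ ℕ, k·D(G) + 1 ≤ ρ_{2k+1}(G) ≤ k·D(G) + ⌊D(G)/2⌋. -/

import Mathlib

open scoped Pointwise

section Defs

variable (G : Type*) [AddCommGroup G]

/-- `S` is a minimal zero-sum sequence (an atom of the monoid `B(G)` of zero-sum
sequences): it is nonempty, has sum zero, and no proper nonempty subsequence has sum zero. -/
def IsMinZS (S : Multiset G) : Prop :=
  S ≠ 0 ∧ S.sum = 0 ∧ ∀ T : Multiset G, T ≤ S → T ≠ 0 → T ≠ S → T.sum ≠ 0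

/-- `S` is a product of `k` atoms of `B(G)`. -/
def IsProdOfAtoms (k : ℕ) (S : Multiset G) : Prop :=
  ∃ L : Multiset (Multiset G), Multiset.card L = k ∧ (∀ U ∈ L, IsMinZS G U) ∧ L.sum = S

/-- `S` is a product of atoms of length `2`. -/
def IsProd2Atoms (S : Multiset G) : Prop :=
  ∃ L : Multiset (Multiset G), (∀ U ∈ L, IsMinZS G U ∧ Multiset.card U = 2) ∧ L.sum = S

/-- The set of lengths of `A` in `B(G)`. -/
def LSet (A : Multiset G) : Set ℕ := { k | IsProdOfAtoms G k A }

/-- `U_k(G)`: the set of `m` such that some product of `k` atoms equals a product of `m` atoms. -/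
def UkSet (k : ℕ) : Set ℕ :=
  { m | ∃ S : Multiset G, IsProdOfAtoms G k S ∧ IsProdOfAtoms G m S }

/-- `ρ_k(G) = sup U_k(G)`. -/
noncomputable def rho (k : ℕ) : ℕ := sSup (UkSet G k)

/-- The Davenport constant `D(G)`: the maximal length of a minimal zero-sum sequence. -/
noncomputable def Dav : ℕ :=
  sSup { n : ℕ | ∃ S : Multiset G, IsMinZS G S ∧ Multiset.card S = n }

/-- `A` is pair-nice with factorization into `2k` atoms of length `d` (where `d` plays
the role of `D^*(G)`). -/
def PairNiceWith (d k : ℕ) (A : Multiset G) : Prop :=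
  1 ≤ k ∧ ∃ (U : Fin (2 * k) → Multiset G) (g : Fin (2 * k) → G),
    (∀ i, IsMinZS G (U i) ∧ Multiset.card (U i) = d) ∧
    (∑ i, U i) = A ∧ (∀ i, g i ∈ U i) ∧
    IsProd2Atoms G (∑ i, ({g i} : Multiset G))

/-- `A` is pair-nice (with respect to `G`, with `d = D^*(G)`). -/
def PairNice (d : ℕ) (A : Multiset G) : Prop := ∃ k, PairNiceWith G d k A

/-- `A` is nice with factorization into `2k+1` atoms of length `d` (where `d` plays the
role of `D^*(G)`), as in Definition 3.1 of the paper. -/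
def NiceWith [DecidableEq G] (d k : ℕ) (A : Multiset G) : Prop :=
  1 ≤ k ∧ ∃ (U : Fin (2 * k + 1) → Multiset G) (g : Fin (2 * k + 1) → G),
    (∀ i, IsMinZS G (U i) ∧ Multiset.card (U i) = d) ∧
    (∑ i, U i) = A ∧ (∀ i, g i ∈ U i) ∧
    ((Odd d ∧ IsProd2Atoms G (A - ∑ i, ({g i} : Multiset G)) ∧
        ∃ W : Fin k → Multiset G, (∀ j, IsMinZS G (W j)) ∧
          (∀ j : Fin k, Multiset.card (W j) = if (j : ℕ) = 0 then 3 else 2) ∧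
          (∑ j, W j) = ∑ i, ({g i} : Multiset G)) ∨
      (Even d ∧ ∃ h : G, h ∈ A - ∑ i, ({g i} : Multiset G) ∧
        IsProd2Atoms G (A - ((∑ i, ({g i} : Multiset G)) + {h})) ∧
        IsProd2Atoms G ((∑ i, ({g i} : Multiset G)) + {h})))

/-- `A` is nice (with respect to `G`, with `d = D^*(G)`). -/
def Nice [DecidableEq G] (d : ℕ) (A : Multiset G) : Prop := ∃ k, NiceWith G d k A

end Defs

section MonoidDefs

variable (H : Type*) [CommMonoid H]

/-- `U_k(H)` for a monoid `H`: the set of `m` such that some product of `k` irreducible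
elements (atoms) of `H` equals a product of `m` atoms. -/
def UkM (k : ℕ) : Set ℕ :=
  { m | ∃ L L' : Multiset H, Multiset.card L = k ∧ Multiset.card L' = m ∧
      (∀ u ∈ L, Irreducible u) ∧ (∀ v ∈ L', Irreducible v) ∧ L.prod = L'.prod }

/-- `ρ_k(H) = sup U_k(H)`. -/
noncomputable def rhoM (k : ℕ) : ℕ := sSup (UkM H k)

end MonoidDefs

namespace Stmt2Aux

variable {G : Type*} [AddCommGroup G]

lemma minZS_zero : IsMinZS G ({0} : Multiset G) := by
  refine ⟨by simp, by simp, ?_⟩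
  intro T hT h0 hS
  rcases Multiset.le_singleton.mp hT with h | h
  · exact absurd h h0
  · exact absurd h hS

lemma minZS_pair {g : G} (hg : g ≠ 0) : IsMinZS G ({g, -g} : Multiset G) := by
  refine ⟨by simp, by simp, ?_⟩
  intro T hT h0 hS
  have hcard : Multiset.card T ≤ 2 := by
    simpa using Multiset.card_le_card hT
  interval_cases h : Multiset.card T
  · exact absurd (Multiset.card_eq_zero.mp h) h0
  · obtain ⟨a, rfl⟩ := Multiset.card_eq_one.mp h
    have : a ∈ ({g, -g} : Multiset G) := Multiset.mem_of_le hT (by simp)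
    rcases Multiset.mem_cons.mp this with rfl | hb
    · simpa
    · simp only [Multiset.mem_singleton] at hb
      subst hb
      simpa using neg_ne_zero.mpr hg
  · exact absurd (Multiset.eq_of_le_of_card_le hT (by simp [h])) hS

lemma minZS_neg {S : Multiset G} (h : IsMinZS G S) :
    IsMinZS G (S.map (fun x => -x)) := by
  obtain ⟨h0, hs, hmin⟩ := h
  refine ⟨by simpa using h0, ?_, ?_⟩
  · have : (S.map (fun x => -x)).sum = -S.sum := by
      simpa using Multiset.sum_map_neg' S
    simp [this, hs]
  · intro T hT hT0 hTS
    set T' : Multiset G := T.map (fun x => -x) with hT'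
    have hTT : T'.map (fun x => -x) = T := by simp [hT', Multiset.map_map]
    have hle : T' ≤ S := by
      rw [← Multiset.map_le_map_iff (f := fun x : G => -x) neg_injective, hTT]
      exact hT
    have h1 : T' ≠ 0 := by
      intro h; rw [h] at hTT; simp at hTT; exact hT0 hTT.symm
    have h2 : T' ≠ S := by
      intro h; rw [h] at hTT; exact hTS hTT.symm
    have := hmin T' hle h1 h2
    intro hsum
    apply this
    have : T'.sum = -T.sum := by
      simpa [hT'] using Multiset.sum_map_neg' T
    simp [this, hsum]

lemma zero_not_mem {S : Multiset G} (h : IsMinZS G S) (h2 : S ≠ {0}) : (0 : G) ∉ S := by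
  intro hmem
  have hle : ({0} : Multiset G) ≤ S := Multiset.singleton_le.mpr hmem
  exact h.2.2 {0} hle (by simp) (Ne.symm h2) (by simp)

lemma two_le_card {S : Multiset G} (h : IsMinZS G S) (h2 : S ≠ {0}) :
    2 ≤ Multiset.card S := by
  rcases Nat.lt_or_ge (Multiset.card S) 2 with hlt | hge
  · interval_cases hc : Multiset.card S
    · exact absurd (Multiset.card_eq_zero.mp hc) h.1
    · obtain ⟨a, rfl⟩ := Multiset.card_eq_one.mp hc
      have : a = 0 := by simpa using h.2.1
      exact absurd (by rw [this]) h2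
  · exact hge

lemma count_le [Fintype G] [DecidableEq G] {S : Multiset G} (h : IsMinZS G S) (g : G) :
    S.count g ≤ Fintype.card G := by
  by_contra hc
  push_neg at hc
  set c := Fintype.card G
  have hcpos : 0 < c := Fintype.card_pos
  have hle : Multiset.replicate c g ≤ S := by
    rw [Multiset.le_iff_count]
    intro a
    by_cases ha : a = g
    · subst ha; simp [Multiset.count_replicate]; omega
    · rw [Multiset.count_replicate, if_neg (fun h => ha h.symm)]
      exact Nat.zero_le _
  have hne : Multiset.replicate c g ≠ S := by
    intro he
    have := congrArg (Multiset.count g) he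
    simp [Multiset.count_replicate] at this
    omega
  have h0 : Multiset.replicate c g ≠ 0 := by
    intro h
    have := congrArg Multiset.card h
    simp [Multiset.card_replicate] at this
    omega
  apply h.2.2 _ hle h0 hne
  simp [Multiset.sum_replicate, c, card_nsmul_eq_zero]

lemma card_le [Fintype G] {S : Multiset G} (h : IsMinZS G S) :
    Multiset.card S ≤ Fintype.card G * Fintype.card G := by
  classical
  have h1 : Multiset.card S = ∑ a ∈ S.toFinset, S.count a :=
    (Multiset.toFinset_sum_count_eq S).symm
  have h2 : ∑ a ∈ S.toFinset, S.count a ≤ ∑ a ∈ S.toFinset, Fintype.card G :=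
    Finset.sum_le_sum fun a _ => count_le h a
  have h3 : ∑ _a ∈ S.toFinset, Fintype.card G ≤ Fintype.card G * Fintype.card G := by
    rw [Finset.sum_const, smul_eq_mul]
    exact Nat.mul_le_mul_right _ (le_trans (Finset.card_le_card (Finset.subset_univ _))
      (le_of_eq (Finset.card_univ)))
  omega

lemma sum_card (L : Multiset (Multiset G)) :
    Multiset.card L.sum = (L.map Multiset.card).sum := by
  induction L using Multiset.induction_on with
  | empty => simp
  | cons a s ih => simp [ih]

lemma sum_count [DecidableEq G] (a : G) (L : Multiset (Multiset G)) :
    L.sum.count a = (L.map (Multiset.count a)).sum := by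
  induction L using Multiset.induction_on with
  | empty => simp
  | cons b s ih => simp [ih]

lemma sum_map_add {α : Type*} (L : Multiset α) (f g : α → ℕ) :
    (L.map fun x => f x + g x).sum = (L.map f).sum + (L.map g).sum := by
  induction L using Multiset.induction_on with
  | empty => simp
  | cons b s ih => simp [ih]; omega

lemma sum_map_pair (U : Multiset G) :
    (U.map fun g => ({g, -g} : Multiset G)).sum = U + U.map (fun x => -x) := by
  induction U using Multiset.induction_on with
  | empty => simp
  | cons a s ih =>
      simp only [Multiset.map_cons, Multiset.sum_cons, ih]
      have h1 : ({a, -a} : Multiset G) = a ::ₘ {-a} := rfl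
      rw [h1, Multiset.cons_add, Multiset.cons_add, Multiset.singleton_add]
      congr 1
      rw [Multiset.add_cons]

lemma sum_map_mul_left' {α : Type*} (c : ℕ) (L : Multiset α) (f : α → ℕ) :
    (L.map fun x => c * f x).sum = c * (L.map f).sum := by
  induction L using Multiset.induction_on with
  | empty => simp
  | cons b s ih => simp [ih, mul_add]

lemma sum_nsmul' (k : ℕ) (P : Multiset (Multiset G)) :
    (k • P).sum = k • P.sum := by
  induction k with
  | zero => simp
  | succ n ih => simp [succ_nsmul, ih]


section DavFacts

variable (G : Type*) [AddCommGroup G] [Fintype G]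

lemma dav_bddAbove :
    BddAbove {n : ℕ | ∃ S : Multiset G, IsMinZS G S ∧ Multiset.card S = n} :=
  ⟨Fintype.card G * Fintype.card G, fun _n ⟨_S, hS, hc⟩ => hc ▸ card_le hS⟩

lemma dav_nonempty :
    {n : ℕ | ∃ S : Multiset G, IsMinZS G S ∧ Multiset.card S = n}.Nonempty :=
  ⟨1, {0}, minZS_zero, by simp⟩

lemma exists_max_atom : ∃ U : Multiset G, IsMinZS G U ∧ Multiset.card U = Dav G := by
  have := Nat.sSup_mem (dav_nonempty G) (dav_bddAbove G)
  exact this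

lemma card_le_dav {S : Multiset G} (h : IsMinZS G S) : Multiset.card S ≤ Dav G :=
  le_csSup (dav_bddAbove G) ⟨S, h, rfl⟩

lemma two_le_dav (hG : 2 ≤ Fintype.card G) : 2 ≤ Dav G := by
  have : Nontrivial G := Fintype.one_lt_card_iff_nontrivial.mp hG
  obtain ⟨g, hg⟩ := exists_ne (0 : G)
  exact le_csSup (dav_bddAbove G) ⟨{g, -g}, minZS_pair hg, by simp⟩

end DavFacts

end Stmt2Aux

theorem stmt2 (G : Type*) [AddCommGroup G] [Fintype G] (hG : 3 ≤ Fintype.card G) :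
    ∀ k : ℕ, 1 ≤ k →
      k * Dav G + 1 ≤ rho G (2 * k + 1) ∧ rho G (2 * k + 1) ≤ k * Dav G + Dav G / 2 := by
  classical
  intro k hk
  open Stmt2Aux in
  have hD2 : 2 ≤ Dav G := two_le_dav G (by omega)
  set D := Dav G with hD
  -- upper bound for every element of UkSet
  have key : ∀ m ∈ UkSet G (2 * k + 1), m ≤ k * D + D / 2 := by
    rintro m ⟨S, ⟨L, hLc, hLa, hLs⟩, ⟨L', hL'c, hL'a, hL's⟩⟩
    have hV : ∀ V ∈ L', 2 ≤ Multiset.card V + V.count 0 := by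
      intro V hVm
      by_cases h0 : V = {0}
      · subst h0; simp
      · have := Stmt2Aux.two_le_card (hL'a V hVm) h0
        omega
    have hU : ∀ U ∈ L, Multiset.card U + (D - 1) * U.count 0 ≤ D := by
      intro U hUm
      by_cases h0 : U = {0}
      · subst h0; simp; omega
      · have h1 := Stmt2Aux.card_le_dav G (hLa U hUm)
        have h2 : U.count 0 = 0 :=
          Multiset.count_eq_zero.mpr (Stmt2Aux.zero_not_mem (hLa U hUm) h0)
        rw [h2]
        simpa using h1
    have e1 : 2 * m ≤ Multiset.card S + S.count 0 := by
      have h := Multiset.sum_map_le_sum_map (fun _ : Multiset G => 2)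
        (fun V => Multiset.card V + V.count 0) hV
      rw [Stmt2Aux.sum_map_add, ← Stmt2Aux.sum_card, ← Stmt2Aux.sum_count, hL's] at h
      rw [Multiset.map_const', Multiset.sum_replicate, smul_eq_mul, hL'c, mul_comm] at h
      exact h
    have e2 : Multiset.card S + (D - 1) * S.count 0 ≤ (2 * k + 1) * D := by
      have h := Multiset.sum_map_le_sum_map
        (fun U => Multiset.card U + (D - 1) * U.count 0) (fun _ : Multiset G => D) hU
      rw [Stmt2Aux.sum_map_add, ← Stmt2Aux.sum_card] at h
      have hmul : (L.map fun U => (D - 1) * U.count 0).sum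
          = (D - 1) * (L.map (Multiset.count 0)).sum :=
        Stmt2Aux.sum_map_mul_left' _ _ _
      rw [hmul, ← Stmt2Aux.sum_count, hLs] at h
      rw [Multiset.map_const', Multiset.sum_replicate, smul_eq_mul, hLc, mul_comm] at h
      rw [mul_comm (D - 1) (S.count 0)]
      exact h
    have hw : S.count 0 ≤ (D - 1) * S.count 0 :=
      Nat.le_mul_of_pos_left _ (by omega)
    have hring : (2 * k + 1) * D = 2 * (k * D) + D := by ring
    set c := Multiset.card S
    set t := S.count 0
    set w := (D - 1) * t
    set e := k * D
    omega
  have mem0 : (2 * k + 1) ∈ UkSet G (2 * k + 1) := by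
    refine ⟨(Multiset.replicate (2 * k + 1) ({0} : Multiset G)).sum,
      ⟨Multiset.replicate (2 * k + 1) ({0} : Multiset G), by simp, ?_, rfl⟩,
      ⟨Multiset.replicate (2 * k + 1) ({0} : Multiset G), by simp, ?_, rfl⟩⟩ <;>
    · intro U hUm
      rw [Multiset.eq_of_mem_replicate hUm]
      exact Stmt2Aux.minZS_zero
  have hbdd : BddAbove (UkSet G (2 * k + 1)) := ⟨k * D + D / 2, key⟩
  constructor
  · -- lower bound
    obtain ⟨U, hU, hUcard⟩ := Stmt2Aux.exists_max_atom G
    have hUne : U ≠ {0} := by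
      intro h
      rw [h] at hUcard
      simp at hUcard
      omega
    have hUnz : ∀ g ∈ U, g ≠ (0 : G) := by
      intro g hg h0
      exact Stmt2Aux.zero_not_mem hU hUne (h0 ▸ hg)
    set P : Multiset (Multiset G) := U.map (fun g => ({g, -g} : Multiset G)) with hP
    set L : Multiset (Multiset G) :=
      Multiset.replicate k U + Multiset.replicate k (U.map fun x => -x)
        + {({0} : Multiset G)} with hL
    set L₂ : Multiset (Multiset G) := k • P + {({0} : Multiset G)} with hL₂
    have hsum : L.sum = L₂.sum := by
      rw [hL, hL₂]
      simp only [Multiset.sum_add, Multiset.sum_replicate, Multiset.sum_singleton,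
        Stmt2Aux.sum_nsmul', hP, Stmt2Aux.sum_map_pair, smul_add]
    have mem1 : (k * D + 1) ∈ UkSet G (2 * k + 1) := by
      refine ⟨L.sum, ⟨L, ?_, ?_, rfl⟩, ⟨L₂, ?_, ?_, hsum.symm⟩⟩
      · simp [hL]; omega
      · intro V hVm
        rw [hL] at hVm
        simp only [Multiset.mem_add, Multiset.mem_replicate, Multiset.mem_singleton] at hVm
        rcases hVm with (⟨_, rfl⟩ | ⟨_, rfl⟩) | rfl
        · exact hU
        · exact Stmt2Aux.minZS_neg hU
        · exact Stmt2Aux.minZS_zero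
      · simp [hL₂, hP, Multiset.card_nsmul, hUcard, hD]
      · intro V hVm
        rw [hL₂] at hVm
        simp only [Multiset.mem_add, Multiset.mem_nsmul, Multiset.mem_singleton] at hVm
        rcases hVm with ⟨_, hVP⟩ | rfl
        · rw [hP] at hVP
          obtain ⟨g, hg, rfl⟩ := Multiset.mem_map.mp hVP
          exact Stmt2Aux.minZS_pair (hUnz g hg)
        · exact Stmt2Aux.minZS_zero
    exact le_csSup hbdd mem1
  · exact csSup_le ⟨2 * k + 1, mem0⟩ key
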